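/- Let i, j ∈ [n] with i ≠ j, and let a, b ∈ PB be bases of the integer polymatroid P with a ≠ b and a_t = b_t for every t ∈ [n] ∖ {i, j}. Then for every index k > max{i, j}, the index k is internally active with respect to a if and only if k is internally active with respect to b. -/

import Mathlib

open Finset

variable {n : ℕ}

/-- The set of bases of the integer polymatroid with rank function `f` on ground set `Fin n`:
integer vectors `a` with `a i ≥ 0`, `∑_{i ∈ I} a i ≤ f I` for every `I`, and `∑ i, a i = f [n]`.
(The upper bound `a i ≤ f {i}` used for the ambient finite set is implied by the constraints.) -/
noncomputable def PB (n : ℕ) (f : Finset (Fin n) → ℕ) : Finset (Fin n → ℤ) :=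
  (Fintype.piFinset fun i : Fin n => Finset.Icc (0 : ℤ) (f {i})).filter fun a =>
    (∀ I : Finset (Fin n), ∑ j ∈ I, a j ≤ (f I : ℤ)) ∧ ∑ j, a j = (f Finset.univ : ℤ)

/-- A set `I` is tight for `a` if `∑_{i ∈ I} a i = f I`. -/
def Tight (f : Finset (Fin n) → ℕ) (a : Fin n → ℤ) (I : Finset (Fin n)) : Prop :=
  ∑ i ∈ I, a i = (f I : ℤ)

/-- `i` is internally active with respect to `a`: `a - e_i + e_j ∉ PB` for every `j < i`. -/
def IntAct (f : Finset (Fin n) → ℕ) (a : Fin n → ℤ) (i : Fin n) : Prop :=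
  ∀ j : Fin n, j < i → a - Pi.single i 1 + Pi.single j 1 ∉ PB n f

/-- `i` is externally active with respect to `a`: `a + e_i - e_j ∉ PB` for every `j < i`. -/
def ExtAct (f : Finset (Fin n) → ℕ) (a : Fin n → ℤ) (i : Fin n) : Prop :=
  ∀ j : Fin n, j < i → a + Pi.single i 1 - Pi.single j 1 ∉ PB n f

open scoped Classical in
/-- `Int(a)`: the set of internally active indices. -/
noncomputable def IntSet (f : Finset (Fin n) → ℕ) (a : Fin n → ℤ) : Finset (Fin n) :=
  Finset.univ.filter fun i => IntAct f a i

open scoped Classical in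
/-- `Ext(a)`: the set of externally active indices. -/
noncomputable def ExtSet (f : Finset (Fin n) → ℕ) (a : Fin n → ℤ) : Finset (Fin n) :=
  Finset.univ.filter fun i => ExtAct f a i

/-- `ι(a) = |Int(a)|`, the internal activity. -/
noncomputable def iota (f : Finset (Fin n) → ℕ) (a : Fin n → ℤ) : ℕ := (IntSet f a).card

/-- `ε(a) = |Ext(a)|`, the external activity. -/
noncomputable def eps (f : Finset (Fin n) → ℕ) (a : Fin n → ℤ) : ℕ := (ExtSet f a).card


lemma mem_PB_iff {f : Finset (Fin n) → ℕ} {a : Fin n → ℤ} :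
    a ∈ PB n f ↔ (∀ t, 0 ≤ a t) ∧ (∀ I : Finset (Fin n), ∑ j ∈ I, a j ≤ (f I : ℤ))
      ∧ ∑ j, a j = (f Finset.univ : ℤ) := by
  constructor
  · intro h
    rw [PB, Finset.mem_filter, Fintype.mem_piFinset] at h
    exact ⟨fun t => (Finset.mem_Icc.mp (h.1 t)).1, h.2.1, h.2.2⟩
  · rintro ⟨h0, h1, h2⟩
    rw [PB, Finset.mem_filter, Fintype.mem_piFinset]
    refine ⟨fun t => Finset.mem_Icc.mpr ⟨h0 t, ?_⟩, h1, h2⟩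
    simpa using h1 {t}

lemma sum_shift (x : Fin n → ℤ) (k l : Fin n) (I : Finset (Fin n)) :
    ∑ t ∈ I, (x - Pi.single k 1 + Pi.single l 1 : Fin n → ℤ) t
      = ∑ t ∈ I, x t - (if k ∈ I then (1:ℤ) else 0) + (if l ∈ I then (1:ℤ) else 0) := by
  simp only [Pi.add_apply, Pi.sub_apply]
  rw [Finset.sum_add_distrib, Finset.sum_sub_distrib, Finset.sum_pi_single',
    Finset.sum_pi_single']

lemma single_one_nonneg (l t : Fin n) : (0:ℤ) ≤ (Pi.single l 1 : Fin n → ℤ) t := by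
  rcases eq_or_ne t l with rfl | h
  · simp
  · rw [Pi.single_eq_of_ne h]

lemma key_notIntAct (f : Finset (Fin n) → ℕ)
    (hsub : ∀ I J : Finset (Fin n), f (I ∪ J) + f (I ∩ J) ≤ f I + f J)
    (i j k : Fin n) (hik : i < k) (hjk : j < k) (hij : i ≠ j)
    (a b : Fin n → ℤ) (ha : a ∈ PB n f) (hb : b ∈ PB n f)
    (d : ℤ) (hd : 0 < d)
    (hai : a i = b i + d) (haj : a j = b j - d)
    (hagree : ∀ t, t ≠ i → t ≠ j → a t = b t)
    (hna : ¬ IntAct f a k) : ¬ IntAct f b k := by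
  rw [IntAct] at hna
  push_neg at hna
  obtain ⟨l, hl, hc⟩ := hna
  obtain ⟨ha0, haI, haS⟩ := mem_PB_iff.mp ha
  obtain ⟨hb0, hbI, hbS⟩ := mem_PB_iff.mp hb
  obtain ⟨hc0, hcI, hcS⟩ := mem_PB_iff.mp hc
  have hlk : l ≠ k := ne_of_lt hl
  have hak1 : 1 ≤ a k := by
    have h0 := hc0 k
    rw [Pi.add_apply, Pi.sub_apply, Pi.single_eq_same, Pi.single_eq_of_ne (Ne.symm hlk)] at h0
    linarith
  have hbk : b k = a k := (hagree k (ne_of_gt hik) (ne_of_gt hjk)).symm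
  have hdiff : ∀ I : Finset (Fin n), ∑ t ∈ I, a t
      = ∑ t ∈ I, b t + (if i ∈ I then d else 0) - (if j ∈ I then d else 0) := by
    intro I
    have h : ∀ t ∈ I, a t = b t + (Pi.single i d : Fin n → ℤ) t - (Pi.single j d : Fin n → ℤ) t := by
      intro t _
      rcases eq_or_ne t i with rfl | hti
      · rw [Pi.single_eq_same, Pi.single_eq_of_ne hij]
        simpa using hai
      rcases eq_or_ne t j with rfl | htj
      · rw [Pi.single_eq_same, Pi.single_eq_of_ne hti]
        simpa using haj
      · rw [Pi.single_eq_of_ne hti, Pi.single_eq_of_ne htj]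
        simpa using hagree t hti htj
    rw [Finset.sum_congr rfl h, Finset.sum_sub_distrib, Finset.sum_add_distrib,
      Finset.sum_pi_single', Finset.sum_pi_single']
  intro hIb
  have h1 := hIb l hl
  have h2 := hIb i hik
  have hfail : ∀ l' : Fin n, b - Pi.single k 1 + Pi.single l' 1 ∉ PB n f →
      ∃ I : Finset (Fin n), l' ∈ I ∧ k ∉ I ∧ ∑ t ∈ I, b t = (f I : ℤ) := by
    intro l' hnot
    have hnn : ∀ t, 0 ≤ (b - Pi.single k 1 + Pi.single l' 1 : Fin n → ℤ) t := by
      intro t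
      rcases eq_or_ne t k with rfl | htk
      · rw [Pi.add_apply, Pi.sub_apply, Pi.single_eq_same, hbk]
        linarith [single_one_nonneg l' t]
      · rw [Pi.add_apply, Pi.sub_apply, Pi.single_eq_of_ne htk]
        linarith [single_one_nonneg l' t, hb0 t]
    have htotal : ∑ t, (b - Pi.single k 1 + Pi.single l' 1 : Fin n → ℤ) t = (f Finset.univ : ℤ) := by
      rw [sum_shift, if_pos (Finset.mem_univ k), if_pos (Finset.mem_univ l'), hbS]
      ring
    have hQ : ¬ ∀ I : Finset (Fin n),
        ∑ t ∈ I, (b - Pi.single k 1 + Pi.single l' 1 : Fin n → ℤ) t ≤ (f I : ℤ) :=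
      fun hQ => hnot (mem_PB_iff.mpr ⟨hnn, hQ, htotal⟩)
    push_neg at hQ
    obtain ⟨I, hI⟩ := hQ
    rw [sum_shift] at hI
    have hble := hbI I
    by_cases hkI : k ∈ I
    · exfalso
      rw [if_pos hkI] at hI
      by_cases hlI : l' ∈ I
      · rw [if_pos hlI] at hI; linarith
      · rw [if_neg hlI] at hI; linarith
    · by_cases hlI : l' ∈ I
      · rw [if_neg hkI, if_pos hlI] at hI
        exact ⟨I, hlI, hkI, le_antisymm hble (by linarith)⟩
      · exfalso
        rw [if_neg hkI, if_neg hlI] at hI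
        linarith
  obtain ⟨I₀, hlI₀, hkI₀, htight₀⟩ := hfail l h1
  obtain ⟨I₁, hiI₁, hkI₁, htight₁⟩ := hfail i h2
  have hcI₀ := hcI I₀
  rw [sum_shift, if_neg hkI₀, if_pos hlI₀] at hcI₀
  have hd₀ := hdiff I₀
  rw [htight₀] at hd₀
  have hIlt : (if i ∈ I₀ then d else 0) - (if j ∈ I₀ then d else 0) ≤ -1 := by linarith
  have hjI₀ : j ∈ I₀ := by
    by_contra h
    rw [if_neg h] at hIlt
    split_ifs at hIlt <;> linarith
  have hiI₀ : i ∉ I₀ := by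
    intro h
    rw [if_pos h, if_pos hjI₀] at hIlt
    linarith
  have hsum_ui : ∑ t ∈ I₀ ∪ I₁, b t + ∑ t ∈ I₀ ∩ I₁, b t
      = ∑ t ∈ I₀, b t + ∑ t ∈ I₁, b t := Finset.sum_union_inter
  have hsubm : (f (I₀ ∪ I₁) : ℤ) + f (I₀ ∩ I₁) ≤ f I₀ + f I₁ := by
    exact_mod_cast hsub I₀ I₁
  have hU1 := hbI (I₀ ∪ I₁)
  have hU2 := hbI (I₀ ∩ I₁)
  have hUtight : ∑ t ∈ I₀ ∪ I₁, b t = (f (I₀ ∪ I₁) : ℤ) := by linarith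
  have hkU : k ∉ I₀ ∪ I₁ := by
    rw [Finset.mem_union]
    rintro (h | h)
    · exact hkI₀ h
    · exact hkI₁ h
  have hlU : l ∈ I₀ ∪ I₁ := Finset.mem_union_left _ hlI₀
  have hiU : i ∈ I₀ ∪ I₁ := Finset.mem_union_right _ hiI₁
  have hjU : j ∈ I₀ ∪ I₁ := Finset.mem_union_left _ hjI₀
  have hda := hdiff (I₀ ∪ I₁)
  rw [if_pos hiU, if_pos hjU] at hda
  have hcU := hcI (I₀ ∪ I₁)
  rw [sum_shift, if_neg hkU, if_pos hlU] at hcU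
  linarith

lemma key_iff (f : Finset (Fin n) → ℕ)
    (hsub : ∀ I J : Finset (Fin n), f (I ∪ J) + f (I ∩ J) ≤ f I + f J)
    (i j k : Fin n) (hik : i < k) (hjk : j < k) (hij : i ≠ j)
    (a b : Fin n → ℤ) (ha : a ∈ PB n f) (hb : b ∈ PB n f)
    (d : ℤ) (hd : 0 < d)
    (hai : a i = b i + d) (haj : a j = b j - d)
    (hagree : ∀ t, t ≠ i → t ≠ j → a t = b t) :
    IntAct f a k ↔ IntAct f b k := by
  constructor
  · intro hA
    by_contra hB
    exact key_notIntAct f hsub j i k hjk hik hij.symm b a hb ha d hd (by linarith) (by linarith)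
      (fun t h1 h2 => (hagree t h2 h1).symm) hB hA
  · intro hB
    by_contra hA
    exact key_notIntAct f hsub i j k hik hjk hij a b ha hb d hd hai haj hagree hA hB

/-- If distinct bases `a, b` agree outside `{i, j}`, then for any `k > max {i, j}`,
`k` is internally active for `a` iff it is internally active for `b`. -/
theorem intAct_iff_of_agree
    (n : ℕ) (hn : 0 < n) (f : Finset (Fin n) → ℕ)
    (hf0 : f ∅ = 0)
    (hmono : ∀ I J : Finset (Fin n), I ⊆ J → f I ≤ f J)
    (hsub : ∀ I J : Finset (Fin n), f (I ∪ J) + f (I ∩ J) ≤ f I + f J)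
    (i j : Fin n) (hij : i ≠ j)
    (a b : Fin n → ℤ) (ha : a ∈ PB n f) (hb : b ∈ PB n f) (hab : a ≠ b)
    (hagree : ∀ t : Fin n, t ≠ i → t ≠ j → a t = b t)
    (k : Fin n) (hk : max i j < k) :
    (IntAct f a k ↔ IntAct f b k) := by
  have hik : i < k := lt_of_le_of_lt (le_max_left i j) hk
  have hjk : j < k := lt_of_le_of_lt (le_max_right i j) hk
  have haS := (mem_PB_iff.mp ha).2.2
  have hbS := (mem_PB_iff.mp hb).2.2
  have hsum0 : (a i - b i) + (a j - b j) = 0 := by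
    have h : ∀ t ∈ Finset.univ, a t - b t
        = (Pi.single i (a i - b i) : Fin n → ℤ) t + (Pi.single j (a j - b j) : Fin n → ℤ) t := by
      intro t _
      rcases eq_or_ne t i with rfl | hti
      · rw [Pi.single_eq_same, Pi.single_eq_of_ne hij]
        ring
      rcases eq_or_ne t j with rfl | htj
      · rw [Pi.single_eq_same, Pi.single_eq_of_ne hti]
        ring
      · rw [Pi.single_eq_of_ne hti, Pi.single_eq_of_ne htj, hagree t hti htj]
        ring
    have h2 := Finset.sum_congr rfl h
    rw [Finset.sum_sub_distrib, haS, hbS, sub_self, Finset.sum_add_distrib,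
      Finset.sum_pi_single', Finset.sum_pi_single', if_pos (Finset.mem_univ i),
      if_pos (Finset.mem_univ j)] at h2
    linarith
  have hne : a i ≠ b i := by
    intro h
    apply hab
    funext t
    rcases eq_or_ne t i with rfl | hti
    · exact h
    rcases eq_or_ne t j with rfl | htj
    · linarith
    · exact hagree t hti htj
  rcases lt_or_gt_of_ne hne with hlt | hgt
  · exact (key_iff f hsub i j k hik hjk hij b a hb ha (b i - a i) (by linarith) (by linarith)
      (by linarith) (fun t h1 h2 => (hagree t h1 h2).symm)).symm
  · exact key_iff f hsub i j k hik hjk hij a b ha hb (a i - b i) (by linarith) (by linarith)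
      (by linarith) hagree
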